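/- Let η > 0. For every h ∈ L²(ℝ;ℂ), the function H(x) = χ_{(-∞,0]}(x) · x · e^{η x} ∫_{x}^{+∞} e^{-η|s|} h(s) ds satisfies ‖H‖_{L²(ℝ)} ≤ C ‖h‖_{L²(ℝ)} with C depending only on η. -/

import Mathlib

open MeasureTheory
open scoped ENNReal

/-- `H(x) = χ_{(-∞,0]}(x) · x · e^{η x} ∫_x^{+∞} e^{-η|s|} h(s) ds`. -/
noncomputable def kernelH (η : ℝ) (h : ℝ → ℂ) (x : ℝ) : ℂ :=
  Set.indicator (Set.Iic (0 : ℝ))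
    (fun x => (x : ℂ) * (Real.exp (η * x) : ℂ) *
      ∫ s in Set.Ioi x, (Real.exp (-η * |s|) : ℂ) * h s) x

lemma kernelH_aux_exp_abs {c : ℝ} (hc : 0 < c) :
    Integrable (fun s : ℝ => Real.exp (-c * |s|)) := by
  have h1 : IntegrableOn (fun s : ℝ => Real.exp (-c * |s|)) (Set.Ioi 0) := by
    refine (exp_neg_integrableOn_Ioi 0 hc).congr_fun (fun x hx => ?_) measurableSet_Ioi
    rw [abs_of_pos hx]
  have h2 : IntegrableOn (fun s : ℝ => Real.exp (-c * |s|)) (Set.Iic 0) := by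
    rw [← Measure.map_neg_eq_self (volume : Measure ℝ)]
    have m : MeasurableEmbedding fun x : ℝ => -x := (Homeomorph.neg ℝ).measurableEmbedding
    rw [m.integrableOn_map_iff]
    simp_rw [Function.comp_def, abs_neg, Set.neg_preimage, Set.neg_Iic, neg_zero]
    exact Iff.mpr integrableOn_Ici_iff_integrableOn_Ioi h1
  have := h2.union h1
  rwa [Set.Iic_union_Ioi, integrableOn_univ] at this

lemma kernelH_aux_sq_exp {c : ℝ} (hc : 0 < c) :
    IntegrableOn (fun x : ℝ => x ^ 2 * Real.exp (c * x)) (Set.Iic 0) := by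
  have h0 : IntegrableOn (fun x : ℝ => x ^ (2 : ℝ) * Real.exp (-c * x ^ (1 : ℝ)))
      (Set.Ioi 0) := integrableOn_rpow_mul_exp_neg_mul_rpow (by norm_num) zero_lt_one hc
  have h1 : IntegrableOn (fun x : ℝ => x ^ 2 * Real.exp (-c * x)) (Set.Ioi 0) := by
    refine h0.congr_fun (fun x hx => ?_) measurableSet_Ioi
    beta_reduce
    rw [Real.rpow_one, show (2 : ℝ) = ((2 : ℕ) : ℝ) by norm_num, Real.rpow_natCast]
  rw [← Measure.map_neg_eq_self (volume : Measure ℝ)]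
  have m : MeasurableEmbedding fun x : ℝ => -x := (Homeomorph.neg ℝ).measurableEmbedding
  rw [m.integrableOn_map_iff]
  simp_rw [Function.comp_def, Set.neg_preimage, Set.neg_Iic, neg_zero]
  rw [integrableOn_Ici_iff_integrableOn_Ioi]
  refine h1.congr_fun (fun x hx => ?_) measurableSet_Ioi
  beta_reduce
  rw [neg_sq, neg_mul, mul_neg]

theorem kernelH_L2_bound (η : ℝ) (hη : 0 < η) :
    ∃ C > 0, ∀ h : ℝ → ℂ, MemLp h 2 (volume : Measure ℝ) →
      eLpNorm (kernelH η h) 2 volume ≤ ENNReal.ofReal C * eLpNorm h 2 volume := by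
  classical
  set φ : ℝ → ℝ≥0∞ := fun x =>
    Set.indicator (Set.Iic (0 : ℝ)) (fun x => ENNReal.ofReal (|x| * Real.exp (η * x))) x with hφ
  set w : ℝ → ℝ≥0∞ := fun s => ENNReal.ofReal (Real.exp (-η * |s|)) with hw
  set A : ℝ≥0∞ := ∫⁻ x, φ x ^ (2 : ℝ) with hA
  set B : ℝ≥0∞ := ∫⁻ s, w s ^ (2 : ℝ) with hB
  -- finiteness of A
  have hAfin : A < ⊤ := by
    have hcalc : ∀ x : ℝ, φ x ^ (2 : ℝ) =
        Set.indicator (Set.Iic (0 : ℝ))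
          (fun x => ENNReal.ofReal (x ^ 2 * Real.exp (2 * η * x))) x := by
      intro x
      by_cases hx : x ∈ Set.Iic (0 : ℝ)
      · rw [hφ]
        simp only [Set.indicator_of_mem hx]
        rw [ENNReal.ofReal_rpow_of_nonneg (by positivity) (by norm_num)]
        congr 1
        rw [Real.rpow_two, mul_pow, sq_abs, pow_two (Real.exp (η * x)), ← Real.exp_add]
        have : η * x + η * x = 2 * η * x := by ring
        rw [this]
      · simp [hφ, Set.indicator_of_notMem hx,
          ENNReal.zero_rpow_of_pos (by norm_num : (0:ℝ) < 2)]
    rw [hA]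
    simp_rw [hcalc]
    rw [lintegral_indicator measurableSet_Iic]
    exact (kernelH_aux_sq_exp (by linarith : (0:ℝ) < 2 * η)).setLIntegral_lt_top
  -- finiteness of B
  have hBfin : B < ⊤ := by
    have hcalc : ∀ s : ℝ, w s ^ (2 : ℝ) = ENNReal.ofReal (Real.exp (-(2 * η) * |s|)) := by
      intro s
      rw [hw]
      rw [ENNReal.ofReal_rpow_of_nonneg (Real.exp_nonneg _) (by norm_num)]
      congr 1
      rw [Real.rpow_two, pow_two (Real.exp _), ← Real.exp_add]
      have : -η * |s| + -η * |s| = -(2 * η) * |s| := by ring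
      rw [this]
    rw [hB]
    simp_rw [hcalc]
    exact (kernelH_aux_exp_abs (by linarith : (0:ℝ) < 2 * η)).lintegral_lt_top
  have hABfin : A ^ (1/2 : ℝ) * B ^ (1/2 : ℝ) ≠ ⊤ :=
    ENNReal.mul_ne_top (ENNReal.rpow_ne_top_of_nonneg (by norm_num) hAfin.ne)
      (ENNReal.rpow_ne_top_of_nonneg (by norm_num) hBfin.ne)
  refine ⟨(A ^ (1/2 : ℝ) * B ^ (1/2 : ℝ)).toReal + 1, by positivity, fun h hmem => ?_⟩
  set N : ℝ≥0∞ := eLpNorm h 2 volume with hNdef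
  have hN : N = (∫⁻ x, (‖h x‖₊ : ℝ≥0∞) ^ (2 : ℝ)) ^ (1/2 : ℝ) := by
    rw [hNdef, eLpNorm_eq_lintegral_rpow_enorm_toReal two_ne_zero ENNReal.ofNat_ne_top]
    norm_num
    rfl
  set J : ℝ≥0∞ := ∫⁻ s, w s * (‖h s‖₊ : ℝ≥0∞) with hJ
  -- Hölder's inequality for J
  have hJle : J ≤ B ^ (1/2 : ℝ) * N := by
    have hw_meas : Measurable w :=
      (Real.measurable_exp.comp (measurable_const.mul measurable_abs)).ennreal_ofReal
    have hg_meas : AEMeasurable (fun s : ℝ => (‖h s‖₊ : ℝ≥0∞)) volume :=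
      hmem.aestronglyMeasurable.enorm
    have := ENNReal.lintegral_mul_le_Lp_mul_Lq (volume : Measure ℝ)
      Real.HolderConjugate.two_two hw_meas.aemeasurable hg_meas
    calc J = ∫⁻ a, (w * fun s => (‖h s‖₊ : ℝ≥0∞)) a := lintegral_congr fun a => rfl
      _ ≤ (∫⁻ a, w a ^ (2 : ℝ)) ^ (1/2 : ℝ) * (∫⁻ a, (‖h a‖₊ : ℝ≥0∞) ^ (2 : ℝ)) ^ (1/2 : ℝ) :=
          this
      _ = B ^ (1/2 : ℝ) * N := by rw [hN, hB]
  set K : ℝ≥0∞ := B ^ (1/2 : ℝ) * N with hK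
  have hKfin : K ≠ ⊤ :=
    ENNReal.mul_ne_top (ENNReal.rpow_ne_top_of_nonneg (by norm_num) hBfin.ne) hmem.2.ne
  -- pointwise bound
  have hpt : ∀ x, (‖kernelH η h x‖₊ : ℝ≥0∞) ≤ φ x * K := by
    intro x
    by_cases hx : x ∈ Set.Iic (0 : ℝ)
    · have hker : kernelH η h x = (x : ℂ) * (Real.exp (η * x) : ℂ) *
          ∫ s in Set.Ioi x, (Real.exp (-η * |s|) : ℂ) * h s := by
        rw [kernelH, Set.indicator_of_mem hx]
      have hI : (‖∫ s in Set.Ioi x, (Real.exp (-η * |s|) : ℂ) * h s‖₊ : ℝ≥0∞) ≤ J := by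
        refine le_trans (enorm_integral_le_lintegral_enorm _) ?_
        calc ∫⁻ s in Set.Ioi x, (‖(Real.exp (-η * |s|) : ℂ) * h s‖₊ : ℝ≥0∞)
            = ∫⁻ s in Set.Ioi x, w s * (‖h s‖₊ : ℝ≥0∞) := by
              refine lintegral_congr fun s => ?_
              rw [nnnorm_mul, ENNReal.coe_mul, Complex.nnnorm_real,
                (by exact Real.enorm_eq_ofReal_abs (Real.exp (-η * |s|)) :
                    (‖Real.exp (-η * |s|)‖₊ : ℝ≥0∞) = ENNReal.ofReal |Real.exp (-η * |s|)|), abs_of_nonneg (Real.exp_nonneg _), hw]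
          _ ≤ J := setLIntegral_le_lintegral _ _
      rw [hker]
      calc (‖(x : ℂ) * (Real.exp (η * x) : ℂ) *
              ∫ s in Set.Ioi x, (Real.exp (-η * |s|) : ℂ) * h s‖₊ : ℝ≥0∞)
          = (‖(x : ℂ)‖₊ : ℝ≥0∞) * (‖(Real.exp (η * x) : ℂ)‖₊ : ℝ≥0∞) *
              (‖∫ s in Set.Ioi x, (Real.exp (-η * |s|) : ℂ) * h s‖₊ : ℝ≥0∞) := by
            rw [nnnorm_mul, nnnorm_mul]; push_cast; ring
        _ ≤ ENNReal.ofReal |x| * ENNReal.ofReal (Real.exp (η * x)) * J := by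
            rw [Complex.nnnorm_real, Complex.nnnorm_real,
              (by exact Real.enorm_eq_ofReal_abs x : (‖x‖₊ : ℝ≥0∞) = ENNReal.ofReal |x|),
              (by exact Real.enorm_eq_ofReal_abs (Real.exp (η * x)) :
                (‖Real.exp (η * x)‖₊ : ℝ≥0∞) = ENNReal.ofReal |Real.exp (η * x)|),
              abs_of_nonneg (Real.exp_nonneg _)]
            exact mul_le_mul_right hI _
        _ = φ x * J := by
            rw [hφ]
            simp only [Set.indicator_of_mem hx]
            rw [ENNReal.ofReal_mul (abs_nonneg _)]
        _ ≤ φ x * K := mul_le_mul_right hJle _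
    · simp [kernelH, Set.indicator_of_notMem hx, hφ]
  -- main estimate
  have hsn : eLpNorm (kernelH η h) 2 volume =
      (∫⁻ x, (‖kernelH η h x‖₊ : ℝ≥0∞) ^ (2 : ℝ)) ^ (1/2 : ℝ) := by
    rw [eLpNorm_eq_lintegral_rpow_enorm_toReal two_ne_zero ENNReal.ofNat_ne_top]
    norm_num
    rfl
  have key : eLpNorm (kernelH η h) 2 volume ≤ A ^ (1/2 : ℝ) * B ^ (1/2 : ℝ) * N := by
    rw [hsn]
    calc (∫⁻ x, (‖kernelH η h x‖₊ : ℝ≥0∞) ^ (2 : ℝ)) ^ (1/2 : ℝ)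
        ≤ (∫⁻ x, (φ x * K) ^ (2 : ℝ)) ^ (1/2 : ℝ) := by
          refine ENNReal.rpow_le_rpow (lintegral_mono fun x => ?_) (by norm_num)
          exact ENNReal.rpow_le_rpow (hpt x) (by norm_num)
      _ = ((∫⁻ x, φ x ^ (2 : ℝ)) * K ^ (2 : ℝ)) ^ (1/2 : ℝ) := by
          rw [← lintegral_mul_const' _ _ (ENNReal.rpow_ne_top_of_nonneg (by norm_num) hKfin)]
          congr 1
          exact lintegral_congr fun x => ENNReal.mul_rpow_of_nonneg _ _ (by norm_num)
      _ = A ^ (1/2 : ℝ) * K := by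
          rw [ENNReal.mul_rpow_of_nonneg _ _ (by norm_num), ← hA, ← ENNReal.rpow_mul]
          norm_num
      _ = A ^ (1/2 : ℝ) * B ^ (1/2 : ℝ) * N := by rw [hK, mul_assoc]
  refine key.trans (mul_le_mul_left ?_ N)
  calc A ^ (1/2 : ℝ) * B ^ (1/2 : ℝ)
      = ENNReal.ofReal ((A ^ (1/2 : ℝ) * B ^ (1/2 : ℝ)).toReal) :=
        (ENNReal.ofReal_toReal hABfin).symm
    _ ≤ ENNReal.ofReal ((A ^ (1/2 : ℝ) * B ^ (1/2 : ℝ)).toReal + 1) :=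
        ENNReal.ofReal_le_ofReal (by linarith)
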